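/- Let V be a finite-dimensional real normed vector space and K ⊆ V a nonempty compact convex set whose affine span equals V. Then for every linear functional ψ on the real vector space of affine maps V → ℝ, the dual norm of ψ equals its base norm: sup{ |ψ(f)| : f : V → ℝ affine with |f(x)| ≤ 1 for all x ∈ K } = inf{ λ + μ : λ, μ ≥ 0, x, y ∈ K such that ψ(f) = λ · f(x) − μ · f(y) for all affine f : V → ℝ }. -/
import Mathlib

open Set Finset

/-- Helper: convex combination of two "cone points" over a convex set. -/
lemma combo_aux {V : Type*} [AddCommGroup V] [Module ℝ V] {K : Set V} (hconv : Convex ℝ K)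
    {x₁ x₂ : V} (hx₁ : x₁ ∈ K) (hx₂ : x₂ ∈ K) {a e l₁ l₂ : ℝ}
    (ha : 0 ≤ a) (he : 0 ≤ e) (hae : a + e = 1) (h₁ : 0 ≤ l₁) (h₂ : 0 ≤ l₂) :
    ∃ x ∈ K, ∀ g : V →ᵃ[ℝ] ℝ, (a * l₁ + e * l₂) * g x = a * l₁ * g x₁ + e * l₂ * g x₂ := by
  have hc0 : 0 ≤ a * l₁ + e * l₂ := add_nonneg (mul_nonneg ha h₁) (mul_nonneg he h₂)
  rcases eq_or_lt_of_le hc0 with h | h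
  · have h1 : a * l₁ = 0 := by nlinarith [mul_nonneg ha h₁, mul_nonneg he h₂]
    have h2 : e * l₂ = 0 := by nlinarith [mul_nonneg ha h₁, mul_nonneg he h₂]
    exact ⟨x₁, hx₁, fun g => by rw [h1, h2]; ring⟩
  · have hcne : a * l₁ + e * l₂ ≠ 0 := ne_of_gt h
    refine ⟨(a * l₁ / (a * l₁ + e * l₂)) • x₁ + (e * l₂ / (a * l₁ + e * l₂)) • x₂,
      hconv hx₁ hx₂ (by positivity) (by positivity) (by field_simp), fun g => ?_⟩
    rw [Convex.combo_affine_apply (by field_simp)]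
    rw [smul_eq_mul, smul_eq_mul]
    field_simp

/-- Helper: sums of affine maps evaluate pointwise. -/
lemma affineMap_sum_apply {V : Type*} [AddCommGroup V] [Module ℝ V] {ι : Type*}
    (s : Finset ι) (g : ι → (V →ᵃ[ℝ] ℝ)) (x : V) :
    (∑ i ∈ s, g i) x = ∑ i ∈ s, g i x := by
  induction s using Finset.cons_induction with
  | empty => simp
  | cons i s hi ih => simp [Finset.sum_cons, ih]

/-- for every linear functional `ψ` on the space of affine functions over a
nonempty compact convex set `K` with full affine span, the dual norm of `ψ` equals its
base norm. -/
theorem dual_norm_eq_base_norm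
    {V : Type*} [NormedAddCommGroup V] [NormedSpace ℝ V] [FiniteDimensional ℝ V]
    (K : Set V) (hne : K.Nonempty) (hcomp : IsCompact K) (hconv : Convex ℝ K)
    (hspan : affineSpan ℝ K = ⊤)
    (ψ : (V →ᵃ[ℝ] ℝ) →ₗ[ℝ] ℝ) :
    sSup {r : ℝ | ∃ f : V →ᵃ[ℝ] ℝ, (∀ x ∈ K, |f x| ≤ 1) ∧ r = |ψ f|} =
    sInf {r : ℝ | ∃ l m : ℝ, ∃ x ∈ K, ∃ y ∈ K, 0 ≤ l ∧ 0 ≤ m ∧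
      (∀ f : V →ᵃ[ℝ] ℝ, ψ f = l * f x - m * f y) ∧ r = l + m} := by
  classical
  obtain ⟨t, htK, htot, hind⟩ := exists_affineIndependent ℝ V K
  rw [hspan] at htot
  haveI : Finite t := finite_of_fin_dim_affineIndependent ℝ hind
  haveI : Fintype t := Fintype.ofFinite _
  let b : AffineBasis t ℝ V := ⟨Subtype.val, hind, by rwa [Subtype.range_coe]⟩
  have hbK : ∀ i : t, (b i : V) ∈ K := fun i => htK i.2
  -- decomposition of affine maps in barycentric coordinates
  have hdec : ∀ (f : V →ᵃ[ℝ] ℝ) (x : V), f x = ∑ i, b.coord i x * f (b i) := by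
    intro f x
    conv_lhs => rw [← b.affineCombination_coord_eq_self x]
    rw [Finset.map_affineCombination _ _ _ (b.sum_coord_apply_eq_one x) f,
      Finset.affineCombination_eq_linear_combination _ _ _ (b.sum_coord_apply_eq_one x)]
    simp [smul_eq_mul]
  have hfun : ∀ f : V →ᵃ[ℝ] ℝ, f = ∑ i, f (b i) • b.coord i := by
    intro f
    ext x
    rw [affineMap_sum_apply]
    rw [hdec f x]
    exact Finset.sum_congr rfl fun i _ => by simp [AffineMap.coe_smul, mul_comm]
  have hψ : ∀ f : V →ᵃ[ℝ] ℝ, ψ f = ∑ i, f (b i) * ψ (b.coord i) := by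
    intro f
    conv_lhs => rw [hfun f]
    rw [map_sum]
    exact Finset.sum_congr rfl fun i _ => by rw [map_smul, smul_eq_mul]
  -- the dual norm
  set S : Set ℝ := {r : ℝ | ∃ f : V →ᵃ[ℝ] ℝ, (∀ x ∈ K, |f x| ≤ 1) ∧ r = |ψ f|} with hSdef
  have hS0 : (0 : ℝ) ∈ S := ⟨0, by simp, by simp⟩
  have hSbdd : BddAbove S := by
    refine ⟨∑ i, |ψ (b.coord i)|, ?_⟩
    rintro r ⟨f, hf, rfl⟩
    rw [hψ f]
    refine (Finset.abs_sum_le_sum_abs _ _).trans (Finset.sum_le_sum fun i _ => ?_)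
    rw [abs_mul]
    calc |f (b i)| * |ψ (b.coord i)| ≤ 1 * |ψ (b.coord i)| := by
          gcongr; exact hf _ (hbK i)
      _ = |ψ (b.coord i)| := one_mul _
  set N : ℝ := sSup S with hNdef
  have hN0 : 0 ≤ N := le_csSup hSbdd hS0
  have hub : ∀ f : V →ᵃ[ℝ] ℝ, (∀ x ∈ K, |f x| ≤ 1) → |ψ f| ≤ N :=
    fun f hf => le_csSup hSbdd ⟨f, hf, rfl⟩
  have hkey : ∀ (f : V →ᵃ[ℝ] ℝ) (β : ℝ), 0 ≤ β → (∀ x ∈ K, |f x| ≤ β) → |ψ f| ≤ N * β := by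
    intro f β hβ hf
    rcases eq_or_lt_of_le hβ with h0 | hpos
    · have hz : ∀ i : t, f (b i) = 0 := fun i =>
        abs_eq_zero.mp (le_antisymm (by rw [← h0] at hf; exact hf _ (hbK i)) (abs_nonneg _))
      rw [hψ f]
      simp [hz, ← h0]
    · have h1 : ∀ x ∈ K, |(β⁻¹ • f) x| ≤ 1 := by
        intro x hx
        rw [AffineMap.coe_smul, Pi.smul_apply, smul_eq_mul, abs_mul,
          abs_of_nonneg (inv_nonneg.mpr hβ)]
        rw [inv_mul_le_iff₀ hpos, mul_one]
        exact hf x hx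
      have h2 := hub _ h1
      rw [map_smul, smul_eq_mul, abs_mul, abs_of_nonneg (inv_nonneg.mpr hβ)] at h2
      calc |ψ f| = β * (β⁻¹ * |ψ f|) := by field_simp
        _ ≤ β * N := by gcongr
        _ = N * β := mul_comm _ _
  -- the base-norm body in coordinates
  set D : Set (t → ℝ) := {d | ∃ l m, 0 ≤ l ∧ 0 ≤ m ∧ l + m ≤ N ∧ ∃ x ∈ K, ∃ y ∈ K,
    d = fun i => l * b.coord i x - m * b.coord i y} with hDdef
  have hcoord : ∀ i : t, Continuous (b.coord i) :=
    fun i => (b.coord i).continuous_of_finiteDimensional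
  have hDcomp : IsCompact D := by
    have himg : D = (fun q : (ℝ × ℝ) × V × V =>
        fun i => q.1.1 * b.coord i q.2.1 - q.1.2 * b.coord i q.2.2) ''
        (({p : ℝ × ℝ | 0 ≤ p.1 ∧ 0 ≤ p.2 ∧ p.1 + p.2 ≤ N}) ×ˢ (K ×ˢ K)) := by
      ext d
      constructor
      · rintro ⟨l, m, hl, hm, hlm, x, hx, y, hy, rfl⟩
        exact ⟨((l, m), (x, y)), ⟨⟨hl, hm, hlm⟩, hx, hy⟩, rfl⟩
      · rintro ⟨⟨⟨l, m⟩, x, y⟩, ⟨⟨hl, hm, hlm⟩, hx, hy⟩, rfl⟩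
        exact ⟨l, m, hl, hm, hlm, x, hx, y, hy, rfl⟩
    rw [himg]
    refine IsCompact.image (IsCompact.prod ?_ (hcomp.prod hcomp)) ?_
    · refine IsCompact.of_isClosed_subset
        ((isCompact_Icc (a := (0:ℝ)) (b := N)).prod (isCompact_Icc (a := (0:ℝ)) (b := N))) ?_ ?_
      · have : {p : ℝ × ℝ | 0 ≤ p.1 ∧ 0 ≤ p.2 ∧ p.1 + p.2 ≤ N} =
            {p : ℝ × ℝ | 0 ≤ p.1} ∩ ({p | 0 ≤ p.2} ∩ {p | p.1 + p.2 ≤ N}) := by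
          ext p; simp [Set.mem_inter_iff, and_assoc]
        rw [this]
        exact (isClosed_le continuous_const continuous_fst).inter
          ((isClosed_le continuous_const continuous_snd).inter
            (isClosed_le (continuous_fst.add continuous_snd) continuous_const))
      · rintro ⟨l, m⟩ ⟨hl, hm, hlm⟩
        simp only [Set.mem_prod, Set.mem_Icc]
        constructor <;> constructor <;> linarith
    · refine continuous_pi fun i => ?_
      exact (continuous_fst.fst.mul ((hcoord i).comp continuous_snd.fst)).sub
        (continuous_fst.snd.mul ((hcoord i).comp continuous_snd.snd))
  have hDconv : Convex ℝ D := by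
    rintro d₁ ⟨l₁, m₁, hl₁, hm₁, hlm₁, x₁, hx₁, y₁, hy₁, rfl⟩
      d₂ ⟨l₂, m₂, hl₂, hm₂, hlm₂, x₂, hx₂, y₂, hy₂, rfl⟩ a e ha he hae
    obtain ⟨x, hx, hgx⟩ := combo_aux hconv hx₁ hx₂ ha he hae hl₁ hl₂
    obtain ⟨y, hy, hgy⟩ := combo_aux hconv hy₁ hy₂ ha he hae hm₁ hm₂
    refine ⟨a * l₁ + e * l₂, a * m₁ + e * m₂, by positivity, by positivity,
      by nlinarith [mul_le_mul_of_nonneg_left hlm₁ ha, mul_le_mul_of_nonneg_left hlm₂ he],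
      x, hx, y, hy, ?_⟩
    funext i
    have h1 := hgx (b.coord i)
    have h2 := hgy (b.coord i)
    simp only [Pi.add_apply, Pi.smul_apply, smul_eq_mul]
    linarith [h1, h2]
  -- membership of the coordinate vector of ψ
  have hmem : (fun i => ψ (b.coord i)) ∈ D := by
    by_contra hc
    obtain ⟨φ, u, hDu, huψ⟩ := geometric_hahn_banach_closed_point hDconv hDcomp.isClosed hc
    set gg : t → (t → ℝ) := fun i j => if i = j then 1 else 0 with hgg
    set f : V →ᵃ[ℝ] ℝ := ∑ i, φ (gg i) • b.coord i with hfdef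
    have hφ : ∀ d : t → ℝ, φ d = ∑ i, d i * φ (gg i) := by
      intro d
      conv_lhs => rw [pi_eq_sum_univ d]
      rw [map_sum]
      exact Finset.sum_congr rfl fun i _ => by rw [map_smul, smul_eq_mul]
    have hfx : ∀ x : V, f x = ∑ i, φ (gg i) * b.coord i x := by
      intro x
      rw [hfdef, affineMap_sum_apply]
      exact Finset.sum_congr rfl fun i _ => by simp [AffineMap.coe_smul]
    have hfb : ∀ i : t, f (b i) = φ (gg i) := by
      intro i
      rw [hfx]
      simp [AffineBasis.coord_apply]
    have hφψ : (φ fun i => ψ (b.coord i)) = ψ f := by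
      rw [hφ, hψ f]
      exact Finset.sum_congr rfl fun i _ => by rw [hfb]; ring
    have hpt : ∀ (l m : ℝ) (x y : V), 0 ≤ l → 0 ≤ m → l + m ≤ N → x ∈ K → y ∈ K →
        l * f x - m * f y < u := by
      intro l m x y hl hm hlm hx hy
      have h := hDu _ ⟨l, m, hl, hm, hlm, x, hx, y, hy, rfl⟩
      rw [hφ] at h
      have heq : ∑ i, (l * b.coord i x - m * b.coord i y) * φ (gg i) = l * f x - m * f y := by
        rw [hfx x, hfx y, Finset.mul_sum, Finset.mul_sum, ← Finset.sum_sub_distrib]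
        exact Finset.sum_congr rfl fun i _ => by ring
      rw [heq] at h
      exact h
    have hu0 : (0:ℝ) < u := by
      have h := hpt 0 0 hne.choose hne.choose le_rfl le_rfl (by linarith) hne.choose_spec
        hne.choose_spec
      linarith
    have habs : ∀ x ∈ K, N * |f x| < u := by
      intro x hx
      have h1 := hpt N 0 x x hN0 le_rfl (by linarith) hx hx
      have h2 := hpt 0 N x x le_rfl hN0 (by linarith) hx hx
      have : |N * f x| < u := abs_lt.mpr ⟨by linarith, by linarith⟩
      rwa [abs_mul, abs_of_nonneg hN0] at this
    rw [hφψ] at huψ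
    rcases eq_or_lt_of_le hN0 with h0 | hNpos
    · obtain ⟨C, hC⟩ := hcomp.exists_bound_of_continuousOn
        f.continuous_of_finiteDimensional.continuousOn
      have hk := hkey f (max C 0) (le_max_right _ _) (fun x hx => by
        rw [← Real.norm_eq_abs]; exact (hC x hx).trans (le_max_left _ _))
      rw [← h0, zero_mul] at hk
      have : ψ f ≤ 0 := (le_abs_self _).trans hk
      linarith
    · have hfb2 : ∀ x ∈ K, |f x| ≤ u / N := by
        intro x hx
        rw [le_div_iff₀ hNpos]
        nlinarith [habs x hx]
      have hk := hkey f (u / N) (le_of_lt (div_pos hu0 hNpos)) hfb2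
      have : ψ f ≤ u := by
        calc ψ f ≤ |ψ f| := le_abs_self _
          _ ≤ N * (u / N) := hk
          _ = u := by field_simp
      linarith
  obtain ⟨l, m, hl, hm, hlm, x, hx, y, hy, hrep⟩ := hmem
  have hrepψ : ∀ f : V →ᵃ[ℝ] ℝ, ψ f = l * f x - m * f y := by
    intro f
    have hco : ∀ i, ψ (b.coord i) = l * b.coord i x - m * b.coord i y :=
      fun i => congrFun hrep i
    rw [hψ f]
    calc ∑ i, f (b i) * ψ (b.coord i)
        = l * ∑ i, b.coord i x * f (b i) - m * ∑ i, b.coord i y * f (b i) := by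
          rw [Finset.mul_sum, Finset.mul_sum, ← Finset.sum_sub_distrib]
          exact Finset.sum_congr rfl fun i _ => by rw [hco i]; ring
      _ = l * f x - m * f y := by rw [← hdec f x, ← hdec f y]
  -- conclusion
  apply le_antisymm
  · refine le_csInf ⟨l + m, l, m, x, hx, y, hy, hl, hm, hrepψ, rfl⟩ ?_
    rintro r' ⟨l', m', x', hx', y', hy', hl', hm', hrep', rfl⟩
    refine csSup_le ⟨0, hS0⟩ ?_
    rintro r ⟨f, hf, rfl⟩
    calc |ψ f| = |l' * f x' - m' * f y'| := by rw [hrep' f]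
      _ ≤ |l' * f x'| + |m' * f y'| := by
          rw [sub_eq_add_neg]
          refine (abs_add_le _ _).trans_eq ?_
          rw [abs_neg]
      _ ≤ l' * 1 + m' * 1 := by
          rw [abs_mul, abs_mul, abs_of_nonneg hl', abs_of_nonneg hm']
          gcongr
          exacts [hf x' hx', hf y' hy']
      _ = l' + m' := by ring
  · refine le_trans (csInf_le ⟨0, ?_⟩ ⟨l, m, x, hx, y, hy, hl, hm, hrepψ, rfl⟩) hlm
    rintro r ⟨l', m', x', _, y', _, hl', hm', _, rfl⟩
    linarith
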